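/- Let H0, λ, t0 be positive real numbers, and let h : [t0,∞) → ℝ be of class C¹ with |h'(t)| ≤ H0/t for every t ≥ t0. Then for every positive integer n the limit as t → +∞ of ∫_{t0}^t cos(nλs + n·h(s))/s ds exists and is a real number. -/

import Mathlib

open Real Set Filter MeasureTheory intervalIntegral

theorem osc_int_converges
    (H0 lam t0 : ℝ) (hH0 : 0 < H0) (hlam : 0 < lam) (ht0 : 0 < t0)
    (h h' : ℝ → ℝ)
    (hhd : ∀ t ∈ Ici t0, HasDerivAt h (h' t) t)
    (hh'c : ContinuousOn h' (Ici t0))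
    (hh' : ∀ t ∈ Ici t0, |h' t| ≤ H0 / t) :
    ∀ n : ℕ, 0 < n →
      ∃ L : ℝ, Tendsto (fun t => ∫ s in t0..t, Real.cos ((n : ℝ) * lam * s + (n : ℝ) * h s) / s)
        atTop (nhds L) := by
  intro n hn
  set N : ℝ := (n : ℝ) with hNdef
  have hN : 0 < N := Nat.cast_pos.mpr hn
  set c : ℝ := N * lam with hcdef
  have hc : 0 < c := mul_pos hN hlam
  set φ : ℝ → ℝ := fun s => N * lam * s + N * h s with hφdef
  set F : ℝ → ℝ := fun s => Real.sin (φ s) * (c * s)⁻¹ with hFdef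
  set g : ℝ → ℝ := fun s => Real.sin (φ s) * (c * s ^ 2)⁻¹
      - h' s * Real.cos (φ s) * (lam * s)⁻¹ with hgdef
  -- continuity of h on Ici t0
  have hhc : ContinuousOn h (Ici t0) := fun s hs =>
    (hhd s hs).continuousAt.continuousWithinAt
  have hsne : ∀ s ∈ Ici t0, s ≠ 0 := fun s hs => (ht0.trans_le hs).ne'
  have hφc : ContinuousOn φ (Ici t0) := by
    apply ContinuousOn.add
    · exact (continuous_const.mul continuous_id).continuousOn
    · exact continuousOn_const.mul hhc
  -- derivative of F
  have hF : ∀ s ∈ Ici t0, HasDerivAt F (Real.cos (φ s) / s - g s) s := by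
    intro s hs
    have hs0 : (0 : ℝ) < s := ht0.trans_le hs
    have h1 : HasDerivAt (fun x => N * lam * x + N * h x) (N * lam + N * h' s) s := by
      have := ((hasDerivAt_id s).const_mul (N * lam)).add ((hhd s hs).const_mul N)
      simpa [Pi.add_def] using this
    have h2 : HasDerivAt (fun x => Real.sin (φ x))
        (Real.cos (φ s) * (N * lam + N * h' s)) s :=
      (Real.hasDerivAt_sin (φ s)).comp s h1
    have h3 : HasDerivAt (fun x => c * x) c s := by
      simpa using (hasDerivAt_id s).const_mul c
    have h4 : HasDerivAt (fun x => (c * x)⁻¹) (-c / (c * s) ^ 2) s :=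
      h3.inv (by positivity)
    have h5 : HasDerivAt (fun x => Real.sin (φ x) * (c * x)⁻¹) _ s := h2.mul h4
    convert h5 using 1
    have hs' : s ≠ 0 := hs0.ne'
    have hlam' : lam ≠ 0 := hlam.ne'
    have hN' : N ≠ 0 := hN.ne'
    simp only [hgdef, hφdef, hcdef]
    field_simp
    ring
  -- continuity of g and of the main integrand on Ici t0
  have hgc : ContinuousOn g (Ici t0) := by
    apply ContinuousOn.sub
    · exact ((Real.continuous_sin.comp_continuousOn hφc)).mul
        ((continuous_const.mul (continuous_pow 2)).continuousOn.inv₀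
          (fun s hs => mul_ne_zero hc.ne' (pow_ne_zero 2 (hsne s hs))))
    · exact ((hh'c.mul (Real.continuous_cos.comp_continuousOn hφc))).mul
        ((continuous_const.mul continuous_id).continuousOn.inv₀
          (fun s hs => mul_ne_zero hlam.ne' (hsne s hs)))
  have hIc : ContinuousOn (fun s => Real.cos (φ s) / s) (Ici t0) :=
    (Real.continuous_cos.comp_continuousOn hφc).div continuousOn_id hsne
  -- integrability of g on Ioi t0
  set K : ℝ := c⁻¹ + H0 / lam with hKdef
  have hgi : IntegrableOn g (Ioi t0) := by
    have hKint : IntegrableOn (fun s : ℝ => K * s ^ (-2 : ℝ)) (Ioi t0) :=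
      (integrableOn_Ioi_rpow_of_lt (by norm_num) ht0).const_mul K
    refine hKint.mono' ((hgc.mono Ioi_subset_Ici_self).aestronglyMeasurable
      measurableSet_Ioi) ?_
    filter_upwards [ae_restrict_mem measurableSet_Ioi] with s hs
    have hs0 : (0 : ℝ) < s := ht0.trans hs
    have hsi : s ∈ Ici t0 := Set.mem_Ici.mpr (le_of_lt hs)
    have hpow : s ^ (-2 : ℝ) = (s ^ 2)⁻¹ := by
      rw [show (-2 : ℝ) = -(2 : ℝ) by norm_num, Real.rpow_neg hs0.le, Real.rpow_two]
    rw [hpow]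
    have hb1 : |Real.sin (φ s) * (c * s ^ 2)⁻¹| ≤ c⁻¹ * (s ^ 2)⁻¹ := by
      rw [abs_mul]
      have h1 : |Real.sin (φ s)| ≤ 1 := Real.abs_sin_le_one _
      have h2 : |(c * s ^ 2)⁻¹| = c⁻¹ * (s ^ 2)⁻¹ := by
        rw [abs_of_pos (by positivity), mul_inv]
      rw [h2]
      calc |Real.sin (φ s)| * (c⁻¹ * (s ^ 2)⁻¹) ≤ 1 * (c⁻¹ * (s ^ 2)⁻¹) := by
            apply mul_le_mul_of_nonneg_right h1 (by positivity)
        _ = c⁻¹ * (s ^ 2)⁻¹ := one_mul _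
    have hb2 : |h' s * Real.cos (φ s) * (lam * s)⁻¹| ≤ H0 / lam * (s ^ 2)⁻¹ := by
      rw [abs_mul, abs_mul]
      have h1 : |Real.cos (φ s)| ≤ 1 := Real.abs_cos_le_one _
      have h2 : |h' s| ≤ H0 / s := hh' s hsi
      have h3 : |(lam * s)⁻¹| = (lam * s)⁻¹ := abs_of_pos (by positivity)
      rw [h3]
      calc |h' s| * |Real.cos (φ s)| * (lam * s)⁻¹
          ≤ (H0 / s) * 1 * (lam * s)⁻¹ := by
            apply mul_le_mul_of_nonneg_right _ (by positivity)
            exact mul_le_mul h2 h1 (abs_nonneg _) (by positivity)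
        _ = H0 / lam * (s ^ 2)⁻¹ := by
            rw [mul_one, mul_inv, div_eq_mul_inv, div_eq_mul_inv, sq, mul_inv]
            ring
    calc ‖g s‖ ≤ |Real.sin (φ s) * (c * s ^ 2)⁻¹| + |h' s * Real.cos (φ s) * (lam * s)⁻¹| :=
          abs_sub _ _
      _ ≤ c⁻¹ * (s ^ 2)⁻¹ + H0 / lam * (s ^ 2)⁻¹ := add_le_add hb1 hb2
      _ = K * (s ^ 2)⁻¹ := by ring
  -- the key identity for t ≥ t0
  have hkey : ∀ t, t0 ≤ t →
      (∫ s in t0..t, Real.cos (φ s) / s) = (F t - F t0) + ∫ s in t0..t, g s := by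
    intro t ht
    have hsub : uIcc t0 t ⊆ Ici t0 := by
      rw [uIcc_of_le ht]; exact Icc_subset_Ici_self
    have hint1 : IntervalIntegrable (fun s => Real.cos (φ s) / s - g s) volume t0 t :=
      ((hIc.sub hgc).mono hsub).intervalIntegrable
    have hint2 : IntervalIntegrable g volume t0 t :=
      (hgc.mono hsub).intervalIntegrable
    have hftc : (∫ s in t0..t, (Real.cos (φ s) / s - g s)) = F t - F t0 :=
      intervalIntegral.integral_eq_sub_of_hasDerivAt
        (fun s hs => hF s (hsub hs)) hint1
    have : (∫ s in t0..t, Real.cos (φ s) / s)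
        = (∫ s in t0..t, (Real.cos (φ s) / s - g s)) + ∫ s in t0..t, g s := by
      rw [← intervalIntegral.integral_add hint1 hint2]
      congr 1; funext s; ring
    rw [this, hftc]
  -- limits
  have hct : Tendsto (fun t : ℝ => c * t) atTop atTop :=
    Tendsto.const_mul_atTop hc tendsto_id
  have hiv : Tendsto (fun t : ℝ => (c * t)⁻¹) atTop (nhds 0) :=
    hct.inv_tendsto_atTop
  have hFlim : Tendsto F atTop (nhds 0) := by
    have hbd : ∀ᶠ t in atTop, |F t| ≤ (c * t)⁻¹ := by
      filter_upwards [eventually_gt_atTop 0] with t ht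
      have : |F t| = |Real.sin (φ t)| * (c * t)⁻¹ := by
        rw [hFdef]; rw [abs_mul, abs_of_pos (by positivity : (0:ℝ) < (c * t)⁻¹)]
      rw [this]
      calc |Real.sin (φ t)| * (c * t)⁻¹ ≤ 1 * (c * t)⁻¹ :=
            mul_le_mul_of_nonneg_right (Real.abs_sin_le_one _) (by positivity)
        _ = (c * t)⁻¹ := one_mul _
    have h0 : Tendsto (fun t : ℝ => -(c * t)⁻¹) atTop (nhds 0) := by
      simpa using hiv.neg
    refine tendsto_of_tendsto_of_tendsto_of_le_of_le' h0 hiv ?_ ?_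
    · filter_upwards [hbd] with t ht
      have := (abs_le.mp ht).1
      linarith
    · filter_upwards [hbd] with t ht
      exact (abs_le.mp ht).2
  have htail : Tendsto (fun t => ∫ s in t0..t, g s) atTop
      (nhds (∫ s in Ioi t0, g s)) :=
    intervalIntegral_tendsto_integral_Ioi t0 hgi tendsto_id
  refine ⟨-F t0 + ∫ s in Ioi t0, g s, ?_⟩
  have hcomb : Tendsto (fun t => (F t - F t0) + ∫ s in t0..t, g s) atTop
      (nhds (-F t0 + ∫ s in Ioi t0, g s)) := by
    have := (hFlim.sub (tendsto_const_nhds : Tendsto (fun _ : ℝ => F t0) atTop (nhds (F t0)))).add htail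
    simpa using this
  refine hcomb.congr' ?_
  filter_upwards [eventually_ge_atTop t0] with t ht
  exact (hkey t ht).symm
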